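/- arXiv:2011.01697 — 3 statements merged into one kernel-verified Lean document; each statement's English description precedes it below -/
import Mathlib

section
/- The random dithering operator with s levels satisfies the variance bound E‖Q(x) − x‖² ≤ min{d/s², √d/s}·‖x‖² for all x ∈ R^d. -/
open MeasureTheory Classical

/-- The random dithering quantizer with `s` levels:
`Q(x)ᵢ = sign(xᵢ)·‖x‖·(1/s)·⌊s|xᵢ|/‖x‖ + ξᵢ⌋`, with the convention `Q(0) = 0`. -/
noncomputable def ditQ (d s : ℕ) (x : EuclideanSpace ℝ (Fin d)) (ξ : Fin d → ℝ) :
    EuclideanSpace ℝ (Fin d) :=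
  WithLp.toLp 2 fun i => if x = 0 then 0 else
    Real.sign (x i) * ‖x‖ * (1 / (s : ℝ)) * (⌊(s : ℝ) * |x i| / ‖x‖ + ξ i⌋ : ℤ)

section DitQAux

open Set Function

instance : IsProbabilityMeasure ((volume : Measure ℝ).restrict (Set.Icc (0:ℝ) 1)) :=
  ⟨by simp [Real.volume_Icc]⟩

lemma ditQ_aux_restrict_pi (d : ℕ) :
    (volume : Measure (Fin d → ℝ)).restrict (Set.univ.pi fun _ => Set.Icc (0:ℝ) 1)
      = Measure.pi (fun _ : Fin d => (volume : Measure ℝ).restrict (Set.Icc (0:ℝ) 1)) := by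
  refine (Measure.pi_eq fun t ht => ?_).symm
  rw [Measure.restrict_apply (MeasurableSet.univ_pi ht), ← Set.pi_inter_distrib,
    volume_pi, Measure.pi_pi]
  exact Finset.prod_congr rfl fun i _ => (Measure.restrict_apply (ht i)).symm

lemma ditQ_aux_map_eval (d : ℕ) (μ : Fin d → Measure ℝ) [∀ i, IsProbabilityMeasure (μ i)]
    (i : Fin d) : (Measure.pi μ).map (Function.eval i) = μ i := by
  ext A hA
  rw [Measure.map_apply (measurable_pi_apply i) hA, Set.eval_preimage, Measure.pi_pi,
    Fintype.prod_eq_single i (fun j hj => by simp [Function.update_of_ne hj])]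
  simp

lemma ditQ_aux_one_dim (a c b : ℝ) (hb : c * a = b) :
    ∫ t in Set.Icc (0:ℝ) 1, (c * (⌊a + t⌋ : ℤ) - b)^2
      = c^2 * (Int.fract a * (1 - Int.fract a)) := by
  subst hb
  set p := Int.fract a with hp
  have hp0 : 0 ≤ p := Int.fract_nonneg a
  have hp1 : p < 1 := Int.fract_lt_one a
  have hfa : (⌊a⌋ : ℝ) = a - p := by rw [hp]; rw [Int.self_sub_fract]
  have h1 : Set.EqOn (fun t => (c * (⌊a + t⌋ : ℤ) - c * a)^2) (fun _ => (c * p)^2)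
      (Set.Ico (0:ℝ) (1 - p)) := by
    intro t ht
    obtain ⟨ht0, ht1⟩ := ht
    have hfl : ⌊a + t⌋ = ⌊a⌋ := by
      rw [Int.floor_eq_iff]
      constructor
      · rw [hfa]; linarith
      · rw [hfa]; linarith
    simp only [hfl, hfa]
    ring
  have h2 : Set.EqOn (fun t => (c * (⌊a + t⌋ : ℤ) - c * a)^2) (fun _ => (c * (1 - p))^2)
      (Set.Icc (1 - p) 1) := by
    intro t ht
    obtain ⟨ht0, ht1⟩ := ht
    have hfl : ⌊a + t⌋ = ⌊a⌋ + 1 := by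
      rw [Int.floor_eq_iff]
      constructor
      · push_cast; rw [hfa]; linarith
      · push_cast; rw [hfa]; linarith
    simp only [hfl]
    push_cast
    rw [hfa]
    ring
  have hsplit : Set.Icc (0:ℝ) 1 = Set.Ico 0 (1 - p) ∪ Set.Icc (1 - p) 1 :=
    (Set.Ico_union_Icc_eq_Icc (by linarith) (by linarith)).symm
  have hdisj : Disjoint (Set.Ico (0:ℝ) (1 - p)) (Set.Icc (1 - p) 1) := by
    rw [Set.disjoint_left]
    rintro t ⟨_, h2'⟩ ⟨h3, _⟩
    linarith
  have hint1 : IntegrableOn (fun t => (c * (⌊a + t⌋ : ℤ) - c * a)^2)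
      (Set.Ico (0:ℝ) (1 - p)) volume := by
    apply IntegrableOn.congr_fun (f := fun _ => (c * p)^2)
    · exact integrableOn_const measure_Ico_lt_top.ne
    · exact fun t ht => (h1 ht).symm
    · exact measurableSet_Ico
  have hint2 : IntegrableOn (fun t => (c * (⌊a + t⌋ : ℤ) - c * a)^2)
      (Set.Icc (1 - p) 1) volume := by
    apply IntegrableOn.congr_fun (f := fun _ => (c * (1 - p))^2)
    · exact integrableOn_const measure_Icc_lt_top.ne
    · exact fun t ht => (h2 ht).symm
    · exact measurableSet_Icc
  rw [hsplit, setIntegral_union hdisj measurableSet_Icc hint1 hint2,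
    setIntegral_congr_fun measurableSet_Ico h1, setIntegral_congr_fun measurableSet_Icc h2,
    setIntegral_const, setIntegral_const, measureReal_def, measureReal_def, Real.volume_Ico, Real.volume_Icc,
    ENNReal.toReal_ofReal (by linarith), ENNReal.toReal_ofReal (by linarith), smul_eq_mul,
    smul_eq_mul]
  ring

lemma ditQ_aux_sign_mul_abs (y : ℝ) : Real.sign y * |y| = y := by
  rcases lt_trichotomy y 0 with h | h | h
  · rw [Real.sign_of_neg h, abs_of_neg h]; ring
  · simp [h]
  · rw [Real.sign_of_pos h, abs_of_pos h]; ring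

lemma ditQ_aux_sign_sq_le (y : ℝ) : (Real.sign y)^2 ≤ 1 := by
  rcases Real.sign_apply_eq y with h | h | h <;> rw [h] <;> norm_num

end DitQAux

/-- Random dithering with `s` levels satisfies the variance bound
`E‖Q(x) − x‖² ≤ min{d/s², √d/s}·‖x‖²`, where `ξ` is uniform on `[0,1]^d`. -/
theorem ditQ_variance (d s : ℕ) (hs : 0 < s) (x : EuclideanSpace ℝ (Fin d)) :
    ∫ ξ in (Set.univ.pi fun _ : Fin d => Set.Icc (0 : ℝ) 1),
        ‖ditQ d s x ξ - x‖ ^ 2 ∂(volume : Measure (Fin d → ℝ))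
      ≤ min ((d : ℝ) / (s : ℝ) ^ 2) (Real.sqrt d / s) * ‖x‖ ^ 2 := by

  have hd0 : (0:ℝ) ≤ d := Nat.cast_nonneg d
  have hs0 : (0:ℝ) < s := by exact_mod_cast hs
  rcases eq_or_ne x 0 with rfl | hx
  · have hz : ∀ ξ : Fin d → ℝ, ditQ d s 0 ξ = 0 := fun ξ => by
      ext i; simp [ditQ]
    simp only [hz, sub_self, norm_zero, ne_eq, OfNat.ofNat_ne_zero, not_false_eq_true,
      zero_pow, integral_zero]
    have h1 : (0:ℝ) ≤ min ((d : ℝ) / (s : ℝ) ^ 2) (Real.sqrt d / s) :=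
      le_min (by positivity) (by positivity)
    positivity
  have hr0 : (0:ℝ) < ‖x‖ := by
    rw [norm_pos_iff]; exact hx
  set g : Fin d → ℝ → ℝ := fun i t =>
    (Real.sign (x i) * ‖x‖ * (1 / (s:ℝ)) * (⌊(s:ℝ) * |x i| / ‖x‖ + t⌋ : ℤ) - x i)^2 with hg
  have hgm : ∀ i, Measurable (g i) := by
    intro i
    apply Measurable.pow_const
    apply Measurable.sub _ measurable_const
    apply Measurable.const_mul
    exact measurable_from_top.comp ((measurable_const.add measurable_id).floor)
  have hnorm : ∀ ξ : Fin d → ℝ, ‖ditQ d s x ξ - x‖^2 = ∑ i, g i (ξ i) := by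
    intro ξ
    rw [PiLp.norm_sq_eq_of_L2]
    refine Finset.sum_congr rfl fun i _ => ?_
    simp [ditQ, hx, hg, Real.norm_eq_abs, sq_abs]
  rw [ditQ_aux_restrict_pi d]
  simp_rw [hnorm]
  have hInt : ∀ i, Integrable (g i) ((volume : Measure ℝ).restrict (Set.Icc (0:ℝ) 1)) := by
    intro i
    set A := (s:ℝ) * |x i| / ‖x‖ with hA
    set C := Real.sign (x i) * ‖x‖ * (1/(s:ℝ)) with hC
    have hA0 : 0 ≤ A := by rw [hA]; positivity
    refine (integrable_const ((|C| * (A + 2) + |x i|)^2)).mono'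
      (hgm i).aestronglyMeasurable ?_
    filter_upwards [ae_restrict_mem measurableSet_Icc] with t ht
    obtain ⟨ht0, ht1⟩ := ht
    have hF0 : (0:ℝ) ≤ ((⌊A + t⌋ : ℤ) : ℝ) := by
      exact_mod_cast Int.floor_nonneg.2 (by linarith)
    have hF2 : ((⌊A + t⌋ : ℤ) : ℝ) ≤ A + 2 := le_trans (Int.floor_le _) (by linarith)
    have h1 : |C * ((⌊A + t⌋ : ℤ) : ℝ)| ≤ |C| * (A + 2) := by
      rw [abs_mul, abs_of_nonneg hF0]
      exact mul_le_mul_of_nonneg_left hF2 (abs_nonneg C)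
    have hgt : g i t = (C * ((⌊A + t⌋ : ℤ) : ℝ) - x i)^2 := rfl
    rw [hgt, Real.norm_eq_abs, abs_of_nonneg (sq_nonneg _)]
    apply sq_le_sq'
    · have := neg_abs_le (C * ((⌊A + t⌋ : ℤ) : ℝ))
      have := le_abs_self (x i)
      linarith
    · have := le_abs_self (C * ((⌊A + t⌋ : ℤ) : ℝ))
      have := neg_abs_le (x i)
      linarith
  have hIntP : ∀ i, Integrable (fun ξ : Fin d → ℝ => g i (ξ i))
      (Measure.pi fun _ : Fin d => (volume : Measure ℝ).restrict (Set.Icc (0:ℝ) 1)) := by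
    intro i
    have h := hInt i
    rw [← ditQ_aux_map_eval d (fun _ => (volume : Measure ℝ).restrict (Set.Icc (0:ℝ) 1)) i] at h
    exact (integrable_map_measure (hgm i).aestronglyMeasurable
      (measurable_pi_apply i).aemeasurable).mp h
  rw [integral_finset_sum _ (fun i _ => hIntP i)]
  have key : ∀ i, (∫ ξ, g i (ξ i)
        ∂(Measure.pi fun _ : Fin d => (volume : Measure ℝ).restrict (Set.Icc (0:ℝ) 1)))
      = ∫ t in Set.Icc (0:ℝ) 1, g i t := by
    intro i
    have h := integral_map
      (μ := Measure.pi fun _ : Fin d => (volume : Measure ℝ).restrict (Set.Icc (0:ℝ) 1))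
      (φ := fun ξ : Fin d → ℝ => ξ i) (f := g i)
      (measurable_pi_apply i).aemeasurable ((hgm i).aestronglyMeasurable)
    rw [ditQ_aux_map_eval d (fun _ => (volume : Measure ℝ).restrict (Set.Icc (0:ℝ) 1)) i] at h
    exact h.symm
  simp_rw [key]
  have hval : ∀ i, ∫ t in Set.Icc (0:ℝ) 1, g i t
      = (Real.sign (x i) * ‖x‖ * (1/(s:ℝ)))^2
        * (Int.fract ((s:ℝ) * |x i| / ‖x‖) * (1 - Int.fract ((s:ℝ) * |x i| / ‖x‖))) := by
    intro i
    have hca : Real.sign (x i) * ‖x‖ * (1/(s:ℝ)) * ((s:ℝ) * |x i| / ‖x‖) = x i := by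
      have h0 : Real.sign (x i) * ‖x‖ * (1/(s:ℝ)) * ((s:ℝ) * |x i| / ‖x‖)
          = Real.sign (x i) * |x i| := by
        field_simp
      rw [h0, ditQ_aux_sign_mul_abs]
    exact ditQ_aux_one_dim _ _ _ hca
  simp_rw [hval]
  -- termwise bound
  have hterm : ∀ i, (Real.sign (x i) * ‖x‖ * (1/(s:ℝ)))^2
        * (Int.fract ((s:ℝ) * |x i| / ‖x‖) * (1 - Int.fract ((s:ℝ) * |x i| / ‖x‖)))
      ≤ (‖x‖^2 / (s:ℝ)^2) * min 1 ((s:ℝ) * |x i| / ‖x‖) := by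
    intro i
    set A := (s:ℝ) * |x i| / ‖x‖ with hA
    have hA0 : 0 ≤ A := by rw [hA]; positivity
    have hf0 : 0 ≤ Int.fract A := Int.fract_nonneg A
    have hf1 : Int.fract A < 1 := Int.fract_lt_one A
    have hfloor : (0:ℝ) ≤ (⌊A⌋ : ℝ) := by exact_mod_cast Int.floor_nonneg.2 hA0
    have hfr : Int.fract A ≤ A := by
      have := Int.self_sub_fract A
      linarith
    have hsign : (Real.sign (x i) * ‖x‖ * (1/(s:ℝ)))^2 ≤ ‖x‖^2 / (s:ℝ)^2 := by
      have h1 := ditQ_aux_sign_sq_le (x i)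
      have h2 : (Real.sign (x i) * ‖x‖ * (1/(s:ℝ)))^2
          = (Real.sign (x i))^2 * (‖x‖^2 / (s:ℝ)^2) := by
        field_simp
      rw [h2]
      nlinarith [div_nonneg (sq_nonneg ‖x‖) (sq_nonneg (s:ℝ)), sq_nonneg (Real.sign (x i))]
    have hfr2 : Int.fract A * (1 - Int.fract A) ≤ min 1 A := by
      apply le_min
      · nlinarith
      · nlinarith
    have hprod0 : 0 ≤ Int.fract A * (1 - Int.fract A) := by nlinarith
    exact mul_le_mul hsign hfr2 hprod0 (by positivity)
  calc ∑ i, (Real.sign (x i) * ‖x‖ * (1/(s:ℝ)))^2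
        * (Int.fract ((s:ℝ) * |x i| / ‖x‖) * (1 - Int.fract ((s:ℝ) * |x i| / ‖x‖)))
      ≤ ∑ i, (‖x‖^2 / (s:ℝ)^2) * min 1 ((s:ℝ) * |x i| / ‖x‖) :=
        Finset.sum_le_sum fun i _ => hterm i
    _ = (‖x‖^2 / (s:ℝ)^2) * ∑ i, min 1 ((s:ℝ) * |x i| / ‖x‖) := by
        rw [Finset.mul_sum]
    _ ≤ min ((d : ℝ) / (s : ℝ) ^ 2) (Real.sqrt d / s) * ‖x‖ ^ 2 := by
        have habs : ∑ i, |x i| ≤ Real.sqrt d * ‖x‖ := by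
          have hxn : ∑ i, |x i|^2 = ‖x‖^2 := by
            rw [PiLp.norm_sq_eq_of_L2]
            exact Finset.sum_congr rfl fun i _ => by rw [Real.norm_eq_abs]
          have h := sq_sum_le_card_mul_sum_sq (s := Finset.univ) (f := fun i : Fin d => |x i|)
          rw [hxn, Finset.card_univ, Fintype.card_fin] at h
          have h2 : ∑ i, |x i| ≤ Real.sqrt ((d:ℝ) * ‖x‖^2) := by
            rw [← Real.sqrt_sq (Finset.sum_nonneg fun i _ => abs_nonneg (x i))]
            exact Real.sqrt_le_sqrt h
          rwa [Real.sqrt_mul hd0, Real.sqrt_sq hr0.le] at h2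
        have hS1 : ∑ i, min 1 ((s:ℝ) * |x i| / ‖x‖) ≤ (d:ℝ) := by
          calc ∑ i, min 1 ((s:ℝ) * |x i| / ‖x‖) ≤ ∑ _i : Fin d, (1:ℝ) :=
              Finset.sum_le_sum fun i _ => min_le_left _ _
            _ = (d:ℝ) := by simp
        have hS2 : ∑ i, min 1 ((s:ℝ) * |x i| / ‖x‖) ≤ (s:ℝ) * Real.sqrt d := by
          calc ∑ i, min 1 ((s:ℝ) * |x i| / ‖x‖) ≤ ∑ i, (s:ℝ) * |x i| / ‖x‖ :=
              Finset.sum_le_sum fun i _ => min_le_right _ _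
            _ = ((s:ℝ) / ‖x‖) * ∑ i, |x i| := by
                rw [Finset.mul_sum]
                exact Finset.sum_congr rfl fun i _ => by ring
            _ ≤ ((s:ℝ) / ‖x‖) * (Real.sqrt d * ‖x‖) :=
                mul_le_mul_of_nonneg_left habs (by positivity)
            _ = (s:ℝ) * Real.sqrt d := by field_simp
        rw [min_mul_of_nonneg _ _ (by positivity : (0:ℝ) ≤ ‖x‖^2)]
        apply le_min
        · calc (‖x‖^2 / (s:ℝ)^2) * ∑ i, min 1 ((s:ℝ) * |x i| / ‖x‖)
              ≤ (‖x‖^2 / (s:ℝ)^2) * (d:ℝ) :=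
                mul_le_mul_of_nonneg_left hS1 (by positivity)
            _ = (d:ℝ) / (s:ℝ)^2 * ‖x‖^2 := by ring
        · calc (‖x‖^2 / (s:ℝ)^2) * ∑ i, min 1 ((s:ℝ) * |x i| / ‖x‖)
              ≤ (‖x‖^2 / (s:ℝ)^2) * ((s:ℝ) * Real.sqrt d) :=
                mul_le_mul_of_nonneg_left hS2 (by positivity)
            _ = Real.sqrt d / (s:ℝ) * ‖x‖^2 := by field_simp
end

section
/- Let H, X ∈ R^{d×n} and H⁺ = H + α Q(X − H) where Q is applied (columnwise) as an unbiased random operator with E‖Q(v)−v‖² ≤ ω‖v‖², and α = 1/(ω+1). Then for any fixed X* ∈ R^{d×n}: E‖H⁺ − X*‖_F² ≤ (1−α)‖H − X*‖_F² + α‖X − X*‖_F². -/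
open MeasureTheory Finset

section Aux

variable {d : ℕ} {Ω : Type*} [MeasureSpace Ω] (μ : Measure Ω) [IsProbabilityMeasure μ]

lemma col_expand (Qv : Ω → Fin d → ℝ) (h : Fin d → ℝ) (α : ℝ) (t : Ω) :
    ∑ i, (h i + α * Qv t i) ^ 2
      = (∑ i, (h i) ^ 2) + (2 * α * ∑ i, h i * Qv t i + α ^ 2 * ∑ i, (Qv t i) ^ 2) := by
  rw [Finset.mul_sum, Finset.mul_sum, ← Finset.sum_add_distrib, ← Finset.sum_add_distrib]
  exact Finset.sum_congr rfl fun i _ => by ring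

lemma col_integrable (Qv : Ω → Fin d → ℝ) (h : Fin d → ℝ) (α : ℝ)
    (hi1 : Integrable Qv μ)
    (hi3 : Integrable (fun t => ∑ i, (Qv t i) ^ 2) μ) :
    Integrable (fun t => ∑ i, (h i + α * Qv t i) ^ 2) μ := by
  have hcomp : ∀ i, Integrable (fun t => Qv t i) μ := fun i =>
    (ContinuousLinearMap.proj (R := ℝ) (φ := fun _ : Fin d => ℝ) i).integrable_comp hi1
  have h1 : Integrable (fun t => ∑ i, h i * Qv t i) μ :=
    integrable_finset_sum _ fun i _ => (hcomp i).const_mul (h i)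
  have := ((integrable_const (∑ i, (h i) ^ 2)).add
    (((h1.const_mul (2 * α))).add (hi3.const_mul (α ^ 2))))
  exact this.congr (by
    filter_upwards with t
    exact (col_expand Qv h α t).symm)

lemma col_bound (Qv : Ω → Fin d → ℝ) (v h : Fin d → ℝ) (ω α : ℝ)
    (hω : 0 ≤ ω) (hα : α = 1 / (ω + 1))
    (hi1 : Integrable Qv μ)
    (hi2 : Integrable (fun t => ∑ i, (Qv t i - v i) ^ 2) μ)
    (hi3 : Integrable (fun t => ∑ i, (Qv t i) ^ 2) μ)
    (hub : ∫ t, Qv t ∂μ = v)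
    (hv : ∫ t, ∑ i, (Qv t i - v i) ^ 2 ∂μ ≤ ω * ∑ i, (v i) ^ 2) :
    ∫ t, ∑ i, (h i + α * Qv t i) ^ 2 ∂μ
      ≤ (∑ i, (h i) ^ 2) + 2 * α * (∑ i, h i * v i) + α * ∑ i, (v i) ^ 2 := by
  have hpos : (0:ℝ) < ω + 1 := by linarith
  have hcomp : ∀ i, Integrable (fun t => Qv t i) μ := fun i =>
    (ContinuousLinearMap.proj (R := ℝ) (φ := fun _ : Fin d => ℝ) i).integrable_comp hi1
  have hQi : ∀ i, ∫ t, Qv t i ∂μ = v i := fun i => by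
    have := (ContinuousLinearMap.proj (R := ℝ) (φ := fun _ : Fin d => ℝ) i).integral_comp_comm hi1
    simpa [hub] using this
  have h1 : Integrable (fun t => ∑ i, h i * Qv t i) μ :=
    integrable_finset_sum _ fun i _ => (hcomp i).const_mul (h i)
  have h1' : Integrable (fun t => ∑ i, 2 * v i * Qv t i) μ :=
    integrable_finset_sum _ fun i _ => (hcomp i).const_mul (2 * v i)
  -- bound on the second moment of Qv
  have hQsq : ∫ t, ∑ i, (Qv t i) ^ 2 ∂μ ≤ (ω + 1) * ∑ i, (v i) ^ 2 := by
    have key : ∀ t, ∑ i, (Qv t i) ^ 2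
        = (∑ i, (Qv t i - v i) ^ 2) + ((∑ i, 2 * v i * Qv t i) + (- ∑ i, (v i) ^ 2)) := by
      intro t
      have : (∑ i, (Qv t i - v i) ^ 2) + ((∑ i, 2 * v i * Qv t i) + (- ∑ i, (v i) ^ 2))
          = ∑ i, ((Qv t i - v i) ^ 2 + (2 * v i * Qv t i + (- (v i) ^ 2))) := by
        rw [Finset.sum_add_distrib, Finset.sum_add_distrib, Finset.sum_neg_distrib]
      rw [this]
      exact Finset.sum_congr rfl fun i _ => by ring
    calc ∫ t, ∑ i, (Qv t i) ^ 2 ∂μ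
        = ∫ t, ((∑ i, (Qv t i - v i) ^ 2)
            + ((∑ i, 2 * v i * Qv t i) + (- ∑ i, (v i) ^ 2))) ∂μ := by
          exact integral_congr_ae (by filter_upwards with t; exact key t)
      _ = (∫ t, ∑ i, (Qv t i - v i) ^ 2 ∂μ)
            + ((∫ t, ∑ i, 2 * v i * Qv t i ∂μ) + (- ∑ i, (v i) ^ 2)) := by
          have hG : Integrable (fun t => (∑ i, 2 * v i * Qv t i) + (- ∑ i, (v i) ^ 2)) μ :=
            h1'.add (integrable_const _)
          rw [integral_add hi2 hG,
            integral_add h1' (integrable_const (- ∑ i, (v i) ^ 2)), integral_const,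
            probReal_univ, one_smul]
      _ = (∫ t, ∑ i, (Qv t i - v i) ^ 2 ∂μ)
            + ((∑ i, 2 * v i * v i) + (- ∑ i, (v i) ^ 2)) := by
          rw [integral_finset_sum _ fun i _ => (hcomp i).const_mul (2 * v i)]
          congr 2
          exact Finset.sum_congr rfl fun i _ => by rw [integral_const_mul, hQi]
      _ ≤ ω * ∑ i, (v i) ^ 2 + ((∑ i, 2 * v i * v i) + (- ∑ i, (v i) ^ 2)) := by
          linarith [hv]
      _ = (ω + 1) * ∑ i, (v i) ^ 2 := by
          rw [show (∑ i, 2 * v i * v i) = 2 * ∑ i, (v i) ^ 2 by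
            rw [Finset.mul_sum]; exact Finset.sum_congr rfl fun i _ => by ring]
          ring
  -- expand the integral
  have hmain : ∫ t, ∑ i, (h i + α * Qv t i) ^ 2 ∂μ
      = (∑ i, (h i) ^ 2) + (2 * α * (∑ i, h i * v i)
          + α ^ 2 * ∫ t, ∑ i, (Qv t i) ^ 2 ∂μ) := by
    calc ∫ t, ∑ i, (h i + α * Qv t i) ^ 2 ∂μ
        = ∫ t, ((∑ i, (h i) ^ 2)
            + (2 * α * ∑ i, h i * Qv t i + α ^ 2 * ∑ i, (Qv t i) ^ 2)) ∂μ :=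
          integral_congr_ae (by filter_upwards with t; exact col_expand Qv h α t)
      _ = (∑ i, (h i) ^ 2) + (2 * α * (∫ t, ∑ i, h i * Qv t i ∂μ)
            + α ^ 2 * ∫ t, ∑ i, (Qv t i) ^ 2 ∂μ) := by
          have hG : Integrable (fun t => 2 * α * (∑ i, h i * Qv t i)
              + α ^ 2 * ∑ i, (Qv t i) ^ 2) μ :=
            (h1.const_mul (2 * α)).add (hi3.const_mul (α ^ 2))
          rw [integral_add (integrable_const (∑ i, (h i) ^ 2)) hG,
            integral_add (h1.const_mul (2 * α)) (hi3.const_mul (α ^ 2)),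
            integral_const, probReal_univ, one_smul,
            integral_const_mul, integral_const_mul]
      _ = (∑ i, (h i) ^ 2) + (2 * α * (∑ i, h i * v i)
            + α ^ 2 * ∫ t, ∑ i, (Qv t i) ^ 2 ∂μ) := by
          rw [integral_finset_sum _ fun i _ => (hcomp i).const_mul (h i)]
          congr 3
          exact Finset.sum_congr rfl fun i _ => by rw [integral_const_mul, hQi]
  rw [hmain]
  have hα2 : α ^ 2 * ((ω + 1) * ∑ i, (v i) ^ 2) = α * ∑ i, (v i) ^ 2 := by
    have : α * (ω + 1) = 1 := by rw [hα]; field_simp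
    calc α ^ 2 * ((ω + 1) * ∑ i, (v i) ^ 2)
        = α * (α * (ω + 1)) * ∑ i, (v i) ^ 2 := by ring
      _ = α * ∑ i, (v i) ^ 2 := by rw [this]; ring
  have hαpos : 0 ≤ α ^ 2 := sq_nonneg α
  nlinarith [mul_le_mul_of_nonneg_left hQsq hαpos]

end Aux

/-- Variance-reduction step for the quantization memory: with
`H⁺ = H + α·Q(X − H)` (the unbiased `ω`-quantizer `Q` applied columnwise) and
`α = 1/(ω+1)`, one has
`E‖H⁺ − X*‖_F² ≤ (1−α)‖H − X*‖_F² + α‖X − X*‖_F²`. -/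
theorem h_update_contraction (d n : ℕ)
    (Ω : Type*) [MeasureSpace Ω] (μ : Measure Ω) [IsProbabilityMeasure μ]
    (Q : (Fin d → ℝ) → Ω → (Fin d → ℝ))
    (ω : ℝ) (hω : 0 ≤ ω)
    (hint₁ : ∀ v, Integrable (fun t => Q v t) μ)
    (hint₂ : ∀ v, Integrable (fun t => ∑ i, (Q v t i - v i) ^ 2) μ)
    (hint₃ : ∀ v, Integrable (fun t => ∑ i, (Q v t i) ^ 2) μ)
    (hunbiased : ∀ v, ∫ t, Q v t ∂μ = v)
    (hvar : ∀ v, ∫ t, ∑ i, (Q v t i - v i) ^ 2 ∂μ ≤ ω * ∑ i, (v i) ^ 2)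
    (H X Xstar : Matrix (Fin d) (Fin n) ℝ)
    (α : ℝ) (hα : α = 1 / (ω + 1))
    (Hplus : Ω → Matrix (Fin d) (Fin n) ℝ)
    (hHplus : ∀ t i j, Hplus t i j = H i j + α * Q (fun i' => X i' j - H i' j) t i) :
    ∫ t, ∑ i, ∑ j, (Hplus t i j - Xstar i j) ^ 2 ∂μ
      ≤ (1 - α) * (∑ i, ∑ j, (H i j - Xstar i j) ^ 2)
        + α * (∑ i, ∑ j, (X i j - Xstar i j) ^ 2) := by
  set v : Fin n → Fin d → ℝ := fun j i => X i j - H i j with hv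
  set hcol : Fin n → Fin d → ℝ := fun j i => H i j - Xstar i j with hhc
  have hrw : ∀ t, ∑ i, ∑ j, (Hplus t i j - Xstar i j) ^ 2
      = ∑ j, ∑ i, (hcol j i + α * Q (v j) t i) ^ 2 := by
    intro t
    rw [Finset.sum_comm]
    refine Finset.sum_congr rfl fun j _ => Finset.sum_congr rfl fun i _ => ?_
    rw [hHplus t i j]; simp [hhc, hv]; ring
  have hLHS : ∫ t, ∑ i, ∑ j, (Hplus t i j - Xstar i j) ^ 2 ∂μ
      = ∑ j, ∫ t, ∑ i, (hcol j i + α * Q (v j) t i) ^ 2 ∂μ := by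
    rw [integral_congr_ae (by filter_upwards with t; exact hrw t)]
    exact integral_finset_sum _ fun j _ =>
      col_integrable μ (Q (v j)) (hcol j) α (hint₁ (v j)) (hint₃ (v j))
  rw [hLHS]
  have hRHS : (1 - α) * (∑ i, ∑ j, (H i j - Xstar i j) ^ 2)
        + α * (∑ i, ∑ j, (X i j - Xstar i j) ^ 2)
      = ∑ j, ((∑ i, (hcol j i) ^ 2) + 2 * α * (∑ i, hcol j i * v j i)
          + α * ∑ i, (v j i) ^ 2) := by
    rw [Finset.sum_comm (f := fun i j => (H i j - Xstar i j) ^ 2),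
      Finset.sum_comm (f := fun i j => (X i j - Xstar i j) ^ 2),
      Finset.mul_sum, Finset.mul_sum, ← Finset.sum_add_distrib]
    refine Finset.sum_congr rfl fun j _ => ?_
    have hx : ∀ i, (X i j - Xstar i j) ^ 2
        = (hcol j i) ^ 2 + 2 * (hcol j i * v j i) + (v j i) ^ 2 := by
      intro i; simp only [hhc, hv]; ring
    rw [Finset.sum_congr rfl fun i _ => hx i]
    rw [Finset.sum_add_distrib, Finset.sum_add_distrib]
    rw [show (∑ i, 2 * (hcol j i * v j i)) = 2 * ∑ i, hcol j i * v j i from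
      (Finset.mul_sum _ _ _).symm]
    ring
  rw [hRHS]
  exact Finset.sum_le_sum fun j _ =>
    col_bound μ (Q (v j)) (v j) (hcol j) ω α hω hα (hint₁ (v j)) (hint₂ (v j))
      (hint₃ (v j)) (hunbiased (v j)) (hvar (v j))
end

section
/- Let f(x) = (1/m) Σ_{j=1}^m f_j(x) with each f_j convex and L-smooth, x* a point, j sampled uniformly, and g = ∇f_j(x) − ∇f_j(w) + ∇f(w). Then E‖g − ∇f(x*)‖² ≤ 4L·B_f(x,x*) + 4L·B_f(w,x*), where the inequality (1/m)Σ_j ‖∇f_j(x) − ∇f_j(x*)‖² ≤ 2L·B_f(x,x*) is assumed for all x. -/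
open Finset

noncomputable section

variable {E : Type*} [NormedAddCommGroup E] [InnerProductSpace ℝ E] [CompleteSpace E]

/-- The finite-sum average `f = (1/m) Σⱼ fⱼ`. -/
def favg (m : ℕ) (fj : Fin m → E → ℝ) (y : E) : ℝ := ((m : ℝ))⁻¹ * ∑ j, fj j y

/-- The gradient of the average, `∇f = (1/m) Σⱼ ∇fⱼ`. -/
def gavg (m : ℕ) (fj : Fin m → E → ℝ) (y : E) : E :=
  ((m : ℝ))⁻¹ • ∑ j, gradient (fj j) y

/-- Bregman divergence of the average: `B_f(y,x*) = f(y) − f(x*) − ⟨∇f(x*), y−x*⟩`. -/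
def BregAvg (m : ℕ) (fj : Fin m → E → ℝ) (y xstar : E) : ℝ :=
  favg m fj y - favg m fj xstar - inner ℝ (gavg m fj xstar) (y - xstar)

/-- SVRG variance bound: with `g = ∇f_j(x) − ∇f_j(w) + ∇f(w)` for uniform `j`,
`E‖g − ∇f(x*)‖² ≤ 4L·B_f(x,x*) + 4L·B_f(w,x*)`, assuming the averaged
smoothness bound `(1/m)Σⱼ‖∇fⱼ(y) − ∇fⱼ(x*)‖² ≤ 2L·B_f(y,x*)` for all `y`. -/
theorem svrg_gradient_variance_bound (m : ℕ) (hm : 0 < m)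
    (fj : Fin m → E → ℝ) (L : ℝ) (hL : 0 < L)
    (hdiff : ∀ j, Differentiable ℝ (fj j))
    (hconv : ∀ j, ConvexOn ℝ Set.univ (fj j))
    (hsmooth : ∀ j, LipschitzWith (Real.toNNReal L) (gradient (fj j)))
    (x w xstar : E)
    (havg : ∀ y : E, ((m : ℝ))⁻¹ *
        ∑ j, ‖gradient (fj j) y - gradient (fj j) xstar‖ ^ 2
      ≤ 2 * L * BregAvg m fj y xstar) :
    ((m : ℝ))⁻¹ * ∑ j, ‖gradient (fj j) x - gradient (fj j) w
          + gavg m fj w - gavg m fj xstar‖ ^ 2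
      ≤ 4 * L * BregAvg m fj x xstar + 4 * L * BregAvg m fj w xstar := by
  classical
  set a : Fin m → E := fun j => gradient (fj j) x - gradient (fj j) xstar with ha
  set b : Fin m → E := fun j => gradient (fj j) w - gradient (fj j) xstar with hb
  set μ : E := gavg m fj w - gavg m fj xstar with hμ
  have hmR : (0:ℝ) < m := by exact_mod_cast hm
  have hinv : (0:ℝ) ≤ (m:ℝ)⁻¹ := by positivity
  have hμeq : (m:ℝ) • μ = ∑ j, b j := by
    rw [hμ]
    simp only [gavg, smul_sub, smul_smul, mul_inv_cancel₀ hmR.ne', one_smul, hb]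
    rw [← Finset.sum_sub_distrib]
  have hvar : ∑ j, ‖b j - μ‖ ^ 2 ≤ ∑ j, ‖b j‖ ^ 2 := by
    have h1 : ∑ j, (inner ℝ (b j) μ : ℝ) = (m:ℝ) * ‖μ‖ ^ 2 := by
      rw [← sum_inner, ← hμeq, real_inner_smul_left, real_inner_self_eq_norm_sq]
    have h2 : ∑ j, ‖b j - μ‖ ^ 2
        = ∑ j, ‖b j‖ ^ 2 - 2 * ((m:ℝ) * ‖μ‖ ^ 2) + (m:ℝ) * ‖μ‖ ^ 2 := by
      simp only [norm_sub_sq_real, Finset.sum_add_distrib, Finset.sum_sub_distrib,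
        Finset.sum_const, card_univ, Fintype.card_fin, nsmul_eq_mul, ← Finset.mul_sum, h1]
    nlinarith [sq_nonneg ‖μ‖]
  have hpt : ∀ j, ‖gradient (fj j) x - gradient (fj j) w
        + gavg m fj w - gavg m fj xstar‖ ^ 2
      ≤ 2 * ‖a j‖ ^ 2 + 2 * ‖b j - μ‖ ^ 2 := by
    intro j
    have he : gradient (fj j) x - gradient (fj j) w + gavg m fj w - gavg m fj xstar
        = a j - (b j - μ) := by
      simp only [ha, hb, hμ]; abel
    rw [he]
    have h := norm_sub_le (a j) (b j - μ)
    nlinarith [h, sq_nonneg (‖a j‖ - ‖b j - μ‖), norm_nonneg (a j - (b j - μ)), norm_nonneg (a j), norm_nonneg (b j - μ)]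
  have hsum : ∑ j, ‖gradient (fj j) x - gradient (fj j) w
        + gavg m fj w - gavg m fj xstar‖ ^ 2
      ≤ 2 * ∑ j, ‖a j‖ ^ 2 + 2 * ∑ j, ‖b j‖ ^ 2 := by
    calc ∑ j, ‖gradient (fj j) x - gradient (fj j) w + gavg m fj w - gavg m fj xstar‖ ^ 2
        ≤ ∑ j, (2 * ‖a j‖ ^ 2 + 2 * ‖b j - μ‖ ^ 2) := Finset.sum_le_sum fun j _ => hpt j
      _ = 2 * ∑ j, ‖a j‖ ^ 2 + 2 * ∑ j, ‖b j - μ‖ ^ 2 := by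
          rw [Finset.sum_add_distrib, Finset.mul_sum, Finset.mul_sum]
      _ ≤ 2 * ∑ j, ‖a j‖ ^ 2 + 2 * ∑ j, ‖b j‖ ^ 2 := by linarith
  have hx := havg x
  have hw := havg w
  change (m:ℝ)⁻¹ * ∑ j, ‖a j‖ ^ 2 ≤ _ at hx
  change (m:ℝ)⁻¹ * ∑ j, ‖b j‖ ^ 2 ≤ _ at hw
  have hmain : (m:ℝ)⁻¹ * ∑ j, ‖gradient (fj j) x - gradient (fj j) w
        + gavg m fj w - gavg m fj xstar‖ ^ 2
      ≤ 2 * ((m:ℝ)⁻¹ * ∑ j, ‖a j‖ ^ 2) + 2 * ((m:ℝ)⁻¹ * ∑ j, ‖b j‖ ^ 2) := by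
    have := mul_le_mul_of_nonneg_left hsum hinv
    linarith [this]
  linarith [hx, hw, hmain]

end
end
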